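/- Let A be a type and I, J finite nonempty types. Let 𝒞 be the category whose objects are triples (K, p, q) with K a finite nonempty type and p : I ↠ K, q : J ↠ K surjections, a morphism (K, p, q) ⟶ (K′, p′, q′) being a map r : K → K′ with r ∘ p = p′ and r ∘ q = q′ (such r is automatically surjective). Then the colimit in the category of types of the functor 𝒞ᵒᵖ ⥤ Type given on objects by (K, p, q) ↦ (K → A), with transition maps given by precomposition, is canonically bijective to the set of pairs (f : I → A, g : J → A) having equal images; the bijection is induced by sending h : K → A to (h ∘ p, h ∘ q). -/

import Mathlib

open CategoryTheory Limits Opposite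

/-- The category `𝒞` of cospans of surjections `I ↠ K ↞ J` (with `K` realized as `Fin n`):
morphisms are maps `r : K → K'` commuting with the structure surjections. -/
structure SurjCospan (I J : Type) : Type where
  n : ℕ
  p : I → Fin n
  q : J → Fin n
  hp : Function.Surjective p
  hq : Function.Surjective q

instance (I J : Type) : Category (SurjCospan I J) where
  Hom X Y := { r : Fin X.n → Fin Y.n // r ∘ X.p = Y.p ∧ r ∘ X.q = Y.q }
  id X := ⟨id, rfl, rfl⟩
  comp {X Y Z} f g := ⟨g.1 ∘ f.1, by
    refine ⟨funext fun i => ?_, funext fun j => ?_⟩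
    · have h1 := congrFun f.2.1 i
      have h2 := congrFun g.2.1 i
      simp only [Function.comp_apply] at h1 h2 ⊢
      rw [h1, h2]
    · have h1 := congrFun f.2.2 j
      have h2 := congrFun g.2.2 j
      simp only [Function.comp_apply] at h1 h2 ⊢
      rw [h1, h2]⟩
  id_comp f := Subtype.ext rfl
  comp_id f := Subtype.ext rfl
  assoc f g h := Subtype.ext rfl

/-- The functor `𝒞ᵒᵖ ⥤ Type` given by `(K, p, q) ↦ (K → A)` with transition maps the
precompositions. -/
def cospanPow (A I J : Type) : (SurjCospan I J)ᵒᵖ ⥤ Type where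
  obj X := Fin X.unop.n → A
  map f := TypeCat.ofHom (fun h => h ∘ f.unop.1)
  map_id := by intros; rfl
  map_comp := by intros; rfl

noncomputable section
namespace Stmt7Aux

variable {A I J : Type} [Fintype I] [Fintype J]

/-- The target set of pairs with equal range. -/
abbrev EqRange (A I J : Type) := { fg : (I → A) × (J → A) // Set.range fg.1 = Set.range fg.2 }

def theCocone (A I J : Type) [Fintype I] [Fintype J] : Cocone (cospanPow A I J) where
  pt := EqRange A I J
  ι :=
  { app := fun X => TypeCat.ofHom (fun h => ⟨(h ∘ X.unop.p, h ∘ X.unop.q),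
      (X.unop.hp.range_comp h).trans (X.unop.hq.range_comp h).symm⟩)
    naturality := fun X Y f => by
      ext h
      apply Subtype.ext
      show ((h ∘ f.unop.1) ∘ Y.unop.p, (h ∘ f.unop.1) ∘ Y.unop.q) = (h ∘ X.unop.p, h ∘ X.unop.q)
      exact congrArg₂ Prod.mk (congrArg (h ∘ ·) f.unop.2.1) (congrArg (h ∘ ·) f.unop.2.2) }

def canon (f : I → A) (g : J → A) (hfg : Set.range f = Set.range g) : SurjCospan I J :=
  haveI : Finite (Set.range f) := (Set.finite_range f).to_subtype
  { n := Nat.card (Set.range f)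
    p := fun i => Finite.equivFin (Set.range f) ⟨f i, Set.mem_range_self i⟩
    q := fun j => Finite.equivFin (Set.range f) ⟨g j, hfg ▸ Set.mem_range_self j⟩
    hp := fun k => by
      obtain ⟨i, hi⟩ := ((Finite.equivFin (Set.range f)).symm k).2
      exact ⟨i, (congrArg (Finite.equivFin (Set.range f)) (Subtype.ext hi)).trans
        (Equiv.apply_symm_apply _ _)⟩
    hq := fun k => by
      obtain ⟨j, hj⟩ := (Set.ext_iff.mp hfg _).mp ((Finite.equivFin (Set.range f)).symm k).2
      exact ⟨j, (congrArg (Finite.equivFin (Set.range f)) (Subtype.ext hj)).trans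
        (Equiv.apply_symm_apply _ _)⟩ }

def canonH (f : I → A) (g : J → A) (hfg : Set.range f = Set.range g) :
    Fin (canon f g hfg).n → A :=
  haveI : Finite (Set.range f) := (Set.finite_range f).to_subtype
  fun k => ((Finite.equivFin (Set.range f)).symm k).1

lemma canonH_comp_p (f : I → A) (g : J → A) (hfg : Set.range f = Set.range g) :
    canonH f g hfg ∘ (canon f g hfg).p = f := by
  funext i
  show (((Finite.equivFin (Set.range f)).symm ((Finite.equivFin (Set.range f))
      ⟨f i, Set.mem_range_self i⟩)) : Set.range f).1 = f i
  rw [Equiv.symm_apply_apply]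

lemma canonH_comp_q (f : I → A) (g : J → A) (hfg : Set.range f = Set.range g) :
    canonH f g hfg ∘ (canon f g hfg).q = g := by
  funext j
  show (((Finite.equivFin (Set.range f)).symm ((Finite.equivFin (Set.range f))
      ⟨g j, hfg ▸ Set.mem_range_self j⟩)) : Set.range f).1 = g j
  rw [Equiv.symm_apply_apply]

def psi (A I J : Type) [Fintype I] [Fintype J] : EqRange A I J → colimit (cospanPow A I J) :=
  fun fg => colimit.ι (cospanPow A I J) (op (canon fg.1.1 fg.1.2 fg.2)) (canonH fg.1.1 fg.1.2 fg.2)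

lemma psi_ι (X : SurjCospan I J) (h : Fin X.n → A)
    (pf : Set.range (h ∘ X.p) = Set.range (h ∘ X.q)) :
    psi A I J ⟨(h ∘ X.p, h ∘ X.q), pf⟩ = colimit.ι (cospanPow A I J) (op X) h := by
  set f := h ∘ X.p
  set g := h ∘ X.q
  haveI : Finite (Set.range f) := (Set.finite_range f).to_subtype
  have hmem : ∀ k, h k ∈ Set.range f := fun k => by
    obtain ⟨i, hi⟩ := X.hp k
    exact ⟨i, by simp [f, hi]⟩
  let r : X ⟶ canon f g pf :=
    ⟨fun k => Finite.equivFin (Set.range f) ⟨h k, hmem k⟩, by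
      constructor
      · funext i
        exact congrArg (Finite.equivFin (Set.range f)) (Subtype.ext rfl)
      · funext j
        exact congrArg (Finite.equivFin (Set.range f)) (Subtype.ext rfl)⟩
  have hcomp : canonH f g pf ∘ r.1 = h := by
    funext k
    show (((Finite.equivFin (Set.range f)).symm ((Finite.equivFin (Set.range f))
        ⟨h k, hmem k⟩)) : Set.range f).1 = h k
    rw [Equiv.symm_apply_apply]
  have := ConcreteCategory.congr_hom (colimit.w (cospanPow A I J) r.op) (canonH f g pf)
  exact this.symm.trans (congrArg (ConcreteCategory.hom (colimit.ι (cospanPow A I J) (op X))) hcomp)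

end Stmt7Aux
end

/-- The colimit over `𝒞ᵒᵖ` of the powers `(K,p,q) ↦ (K → A)` is canonically bijective to
the set of pairs `(f : I → A, g : J → A)` with equal images, via `h ↦ (h ∘ p, h ∘ q)`. -/
theorem stmt7 (A I J : Type) [Fintype I] [Nonempty I] [Fintype J] [Nonempty J] :
    ∃ e : colimit (cospanPow A I J) ≃
        { fg : (I → A) × (J → A) // Set.range fg.1 = Set.range fg.2 },
      ∀ (X : SurjCospan I J) (h : Fin X.n → A),
        (e (colimit.ι (cospanPow A I J) (op X) h)).1 = (h ∘ X.p, h ∘ X.q) := by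
    classical
  refine ⟨{
    toFun := colimit.desc (cospanPow A I J) (Stmt7Aux.theCocone A I J)
    invFun := Stmt7Aux.psi A I J
    left_inv := fun x => by
      obtain ⟨X, h, rfl⟩ := Limits.Types.jointly_surjective' x
      rw [show colimit.desc (cospanPow A I J) (Stmt7Aux.theCocone A I J)
          (colimit.ι (cospanPow A I J) X h)
          = (Stmt7Aux.theCocone A I J).ι.app X h from
        ConcreteCategory.congr_hom (colimit.ι_desc (Stmt7Aux.theCocone A I J) X) h]
      exact Stmt7Aux.psi_ι X.unop h _
    right_inv := fun fg => by
      obtain ⟨⟨f, g⟩, hfg⟩ := fg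
      rw [show Stmt7Aux.psi A I J ⟨(f, g), hfg⟩
          = colimit.ι (cospanPow A I J) (op (Stmt7Aux.canon f g hfg))
            (Stmt7Aux.canonH f g hfg) from rfl]
      rw [show colimit.desc (cospanPow A I J) (Stmt7Aux.theCocone A I J)
          (colimit.ι (cospanPow A I J) (op (Stmt7Aux.canon f g hfg))
            (Stmt7Aux.canonH f g hfg))
          = (Stmt7Aux.theCocone A I J).ι.app _ (Stmt7Aux.canonH f g hfg) from
        ConcreteCategory.congr_hom (colimit.ι_desc (Stmt7Aux.theCocone A I J) _) _]
      exact Subtype.ext (congrArg₂ Prod.mk (Stmt7Aux.canonH_comp_p f g hfg)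
        (Stmt7Aux.canonH_comp_q f g hfg)) }, ?_⟩
  intro X h
  exact congrArg Subtype.val (ConcreteCategory.congr_hom (colimit.ι_desc (Stmt7Aux.theCocone A I J) (op X)) h)
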